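/- Let K be an open planar sector with boundary rays Γ^± and aperture 0 < θ_M - θ_m < π, and suppose the unit vectors d ⊥ d⊥ satisfy d · x̂ > ζ > 0 for all x̂ ∈ K̄ ∩ S¹. With ρ = -τ(d + i d⊥), the modulus of the boundary integral satisfies |∫_{Γ_h^±} e^{ρ·x} dσ| ≥ C_S / τ - (C'/τ) e^{-(1/2) ζ h τ} for all sufficiently large τ, where C_S > 0 depends only on the opening angle and ζ. -/

import Mathlib

open MeasureTheory Set
open scoped RealInnerProductSpace

lemma integ_eval (τ h : ℝ) (hτ : 0 < τ) (hh : 0 < h) (z : ℂ) (hz : z ≠ 0) :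
    (∫ r in Set.Ioo (0 : ℝ) h, Complex.exp (-(τ : ℂ) * (r : ℂ) * z)) =
      (1 - Complex.exp (-(τ:ℂ) * z * h)) / ((τ:ℂ) * z) := by
  have hc : -(τ:ℂ) * z ≠ 0 := by
    simp [hz, Complex.ofReal_ne_zero, ne_of_gt hτ]
  calc (∫ r in Set.Ioo (0 : ℝ) h, Complex.exp (-(τ : ℂ) * (r : ℂ) * z))
      = ∫ r in Set.Ioc (0 : ℝ) h, Complex.exp ((-(τ:ℂ) * z) * (r : ℂ)) := by
        rw [← MeasureTheory.integral_Ioc_eq_integral_Ioo]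
        congr 1; ext r; ring_nf
    _ = ∫ r in (0:ℝ)..h, Complex.exp ((-(τ:ℂ) * z) * (r : ℂ)) :=
        (intervalIntegral.integral_of_le hh.le).symm
    _ = (Complex.exp ((-(τ:ℂ)*z) * (h:ℂ)) - Complex.exp ((-(τ:ℂ)*z) * (0:ℝ))) / (-(τ:ℂ)*z) :=
        integral_exp_mul_complex hc
    _ = (1 - Complex.exp (-(τ:ℂ) * z * h)) / ((τ:ℂ) * z) := by
        rw [Complex.ofReal_zero, mul_zero, Complex.exp_zero]
        rw [div_eq_div_iff hc (by intro hzz; exact hc (by rw [neg_mul]; exact neg_eq_zero.mpr hzz))]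
        ring

lemma key_est (ζ h τ : ℝ) (hζ : 0 < ζ) (hh : 0 < h) (hτ : 1 ≤ τ)
    (z₁ z₂ : ℂ) (h1 : ζ < z₁.re) (h2 : ζ < z₂.re)
    (n1 : Complex.normSq z₁ ≤ 2) (n2 : Complex.normSq z₂ ≤ 2) :
    ζ / τ - 2 / ζ / τ * Real.exp (-(1/2) * ζ * h * τ) ≤
      ‖(1 - Complex.exp (-(τ:ℂ) * z₁ * h)) / ((τ:ℂ) * z₁)
        + (1 - Complex.exp (-(τ:ℂ) * z₂ * h)) / ((τ:ℂ) * z₂)‖ := by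
  have hτ0 : (0:ℝ) < τ := lt_of_lt_of_le one_pos hτ
  have hz1 : z₁ ≠ 0 := fun hz => by simp [hz] at h1; linarith
  have hz2 : z₂ ≠ 0 := fun hz => by simp [hz] at h2; linarith
  have hn1 : 0 < Complex.normSq z₁ := Complex.normSq_pos.mpr hz1
  have hn2 : 0 < Complex.normSq z₂ := Complex.normSq_pos.mpr hz2
  set A : ℂ := ((τ:ℂ) * z₁)⁻¹ + ((τ:ℂ) * z₂)⁻¹ with hA
  set E : ℂ := Complex.exp (-(τ:ℂ) * z₁ * h) / ((τ:ℂ) * z₁)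
    + Complex.exp (-(τ:ℂ) * z₂ * h) / ((τ:ℂ) * z₂) with hE
  have hrw : (1 - Complex.exp (-(τ:ℂ) * z₁ * h)) / ((τ:ℂ) * z₁)
      + (1 - Complex.exp (-(τ:ℂ) * z₂ * h)) / ((τ:ℂ) * z₂) = A - E := by
    rw [hA, hE]; field_simp; ring
  rw [hrw]
  -- lower bound for |A|
  have invre : ∀ z : ℂ, z ≠ 0 → ζ < z.re → Complex.normSq z ≤ 2 →
      ζ / 2 / τ ≤ (((τ:ℂ) * z)⁻¹).re := by
    intro z hz hre hn
    have : ((τ:ℂ) * z)⁻¹ = (τ:ℝ)⁻¹ • z⁻¹ := by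
      rw [mul_inv]; simp [Complex.ofReal_inv]
    rw [this, Complex.smul_re, Complex.inv_re]
    have h2' : ζ / 2 ≤ z.re / Complex.normSq z := by
      rw [div_le_div_iff₀ two_pos (Complex.normSq_pos.mpr hz)]
      nlinarith [hre, hn]
    rw [div_div]
    calc ζ / (2 * τ) = (ζ / 2) * τ⁻¹ := by ring
      _ ≤ (z.re / Complex.normSq z) * τ⁻¹ := by
          apply mul_le_mul_of_nonneg_right h2' (by positivity)
      _ = τ⁻¹ * (z.re / Complex.normSq z) := by ring
  have hAre : ζ / τ ≤ A.re := by
    have := invre z₁ hz1 h1 n1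
    have := invre z₂ hz2 h2 n2
    rw [hA, Complex.add_re]
    have : ζ / 2 / τ + ζ / 2 / τ ≤ (((τ:ℂ) * z₁)⁻¹).re + (((τ:ℂ) * z₂)⁻¹).re := by
      apply add_le_add (invre z₁ hz1 h1 n1) (invre z₂ hz2 h2 n2)
    have e : ζ / 2 / τ + ζ / 2 / τ = ζ / τ := by ring
    linarith
  have hAabs : ζ / τ ≤ ‖A‖ := le_trans hAre (Complex.re_le_norm A)
  -- upper bound for |E|
  have habsz : ∀ z : ℂ, ζ < z.re → ζ ≤ ‖z‖ := fun z hre =>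
    le_trans hre.le (le_trans (Complex.re_le_norm z) le_rfl)
  have eterm : ∀ z : ℂ, z ≠ 0 → ζ < z.re →
      ‖Complex.exp (-(τ:ℂ) * z * h) / ((τ:ℂ) * z)‖ ≤
        1 / ζ / τ * Real.exp (-(1/2) * ζ * h * τ) := by
    intro z hz hre
    rw [norm_div, Complex.norm_exp]
    have hre' : (-(τ:ℂ) * z * h).re = -(τ * h * z.re) := by
      simp [Complex.mul_re, Complex.ofReal_re, Complex.ofReal_im]; ring
    rw [hre']
    have hexp : Real.exp (-(τ * h * z.re)) ≤ Real.exp (-(1/2) * ζ * h * τ) := by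
      apply Real.exp_le_exp.mpr
      have p1 : τ * h * ζ < τ * h * z.re := mul_lt_mul_of_pos_left hre (mul_pos hτ0 hh)
      have p2 : 0 < τ * h * ζ := by positivity
      linarith
    have habs : τ * ζ ≤ ‖(τ:ℂ) * z‖ := by
      rw [norm_mul, Complex.norm_of_nonneg hτ0.le]
      exact mul_le_mul_of_nonneg_left (habsz z hre) hτ0.le
    have hpos : 0 < ‖(τ:ℂ) * z‖ := lt_of_lt_of_le (by positivity) habs
    calc Real.exp (-(τ * h * z.re)) / ‖(τ:ℂ) * z‖
        ≤ Real.exp (-(1/2) * ζ * h * τ) / (τ * ζ) := by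
          apply div_le_div₀ (Real.exp_pos _).le hexp (by positivity) habs
      _ = 1 / ζ / τ * Real.exp (-(1/2) * ζ * h * τ) := by field_simp
  have hEabs : ‖E‖ ≤ 2 / ζ / τ * Real.exp (-(1/2) * ζ * h * τ) := by
    calc ‖E‖ ≤ _ + _ := norm_add_le _ _
      _ ≤ 1 / ζ / τ * Real.exp (-(1/2) * ζ * h * τ)
          + 1 / ζ / τ * Real.exp (-(1/2) * ζ * h * τ) :=
            add_le_add (eterm z₁ hz1 h1) (eterm z₂ hz2 h2)
      _ = 2 / ζ / τ * Real.exp (-(1/2) * ζ * h * τ) := by ring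
  calc ζ / τ - 2 / ζ / τ * Real.exp (-(1/2) * ζ * h * τ)
      ≤ ‖A‖ - ‖E‖ := sub_le_sub hAabs hEabs
    _ ≤ ‖A - E‖ := by
        have := norm_sub_norm_le A E
        simpa using this

lemma norm_cos_sin (θ : ℝ) (x : EuclideanSpace ℝ (Fin 2))
    (hx : x = ![Real.cos θ, Real.sin θ]) : ‖x‖ = 1 := by
  have h0 : x 0 = Real.cos θ := by rw [hx]; rfl
  have h1 : x 1 = Real.sin θ := by rw [hx]; rfl
  rw [EuclideanSpace.norm_eq]
  simp only [Fin.sum_univ_two, h0, h1, Real.norm_eq_abs, sq_abs]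
  rw [Real.cos_sq_add_sin_sq, Real.sqrt_one]

lemma cos_sin_mem_closure (θm θM : ℝ) (hm : -Real.pi < θm) (hmM : θm < θM)
    (hM : θM < Real.pi) (K : Set (EuclideanSpace ℝ (Fin 2)))
    (hK : K = {x | θm < Complex.arg ((x 0 : ℂ) + (x 1 : ℂ) * Complex.I) ∧
                   Complex.arg ((x 0 : ℂ) + (x 1 : ℂ) * Complex.I) < θM})
    (θ0 : ℝ) (hθ0 : θ0 ∈ Set.Icc θm θM) :
    (WithLp.toLp 2 ![Real.cos θ0, Real.sin θ0] : EuclideanSpace ℝ (Fin 2)) ∈ closure K := by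
  set f : ℝ → EuclideanSpace ℝ (Fin 2) := fun θ => WithLp.toLp 2 ![Real.cos θ, Real.sin θ] with hf
  have hcont : Continuous f := by
    have hg : Continuous (fun θ : ℝ => (![Real.cos θ, Real.sin θ] : Fin 2 → ℝ)) := by
      exact continuous_pi fun i => by
        fin_cases i
        · exact Real.continuous_cos
        · exact Real.continuous_sin
    exact (PiLp.continuous_toLp 2 (fun _ : Fin 2 => ℝ)).comp hg
  have hsub : Set.Ioo θm θM ⊆ f ⁻¹' K := by
    intro θ hθ
    have harg : Complex.arg ((f θ 0 : ℂ) + (f θ 1 : ℂ) * Complex.I) = θ := by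
      have h0 : f θ 0 = Real.cos θ := rfl
      have h1 : f θ 1 = Real.sin θ := rfl
      rw [h0, h1, Complex.ofReal_cos, Complex.ofReal_sin]
      exact Complex.arg_cos_add_sin_mul_I ⟨lt_trans hm hθ.1, le_of_lt (lt_trans hθ.2 hM)⟩
    rw [hK]; exact ⟨by rw [harg]; exact hθ.1, by rw [harg]; exact hθ.2⟩
  have : f θ0 ∈ f '' Set.Icc θm θM := ⟨θ0, hθ0, rfl⟩
  have hicc : f '' Set.Icc θm θM ⊆ closure K := by
    rw [← closure_Ioo hmM.ne]
    refine subset_trans (image_closure_subset_closure_image hcont) (closure_mono ?_)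
    exact fun x ⟨θ, hθ, hx⟩ => hx ▸ hsub hθ
  exact hicc this

/-- Lower bound for the boundary integral of the CGO phase over the two truncated
rays of a convex planar sector (aperture `< π`), parametrized by arclength:
`|∫_{Γ_h^±} e^{ρ·x} dσ| ≥ C_S/τ - (C'/τ) e^{-(1/2)ζhτ}` for sufficiently large `τ`,
with `C_S > 0` depending only on the opening angle and `ζ`. -/
theorem boundary_integral_lower_bound_sector (θm θM : ℝ) (hm : -Real.pi < θm)
    (hmM : θm < θM) (hM : θM < Real.pi) (haper : θM - θm < Real.pi)
    (K : Set (EuclideanSpace ℝ (Fin 2)))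
    (hK : K = {x | θm < Complex.arg ((x 0 : ℂ) + (x 1 : ℂ) * Complex.I) ∧
                   Complex.arg ((x 0 : ℂ) + (x 1 : ℂ) * Complex.I) < θM})
    (d dp : EuclideanSpace ℝ (Fin 2)) (hd : ‖d‖ = 1) (hdp : ‖dp‖ = 1)
    (horth : ⟪d, dp⟫ = 0) (ζ : ℝ) (hζ : 0 < ζ)
    (hsep : ∀ x ∈ closure K, ‖x‖ = 1 → ζ < ⟪d, x⟫)
    (xm xM : EuclideanSpace ℝ (Fin 2))
    (hxm : xm = ![Real.cos θm, Real.sin θm]) (hxM : xM = ![Real.cos θM, Real.sin θM])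
    (h : ℝ) (hh : 0 < h) :
    ∃ C > 0, ∃ C' : ℝ, ∃ T : ℝ, ∀ τ : ℝ, T ≤ τ →
      C / τ - C' / τ * Real.exp (-(1 / 2) * ζ * h * τ) ≤
        ‖((∫ r in Set.Ioo (0 : ℝ) h,
              Complex.exp (-(τ : ℂ) * (r : ℂ) * ((⟪d, xm⟫ : ℂ) + (⟪dp, xm⟫ : ℂ) * Complex.I))) +
            ∫ r in Set.Ioo (0 : ℝ) h,
              Complex.exp (-(τ : ℂ) * (r : ℂ) * ((⟪d, xM⟫ : ℂ) + (⟪dp, xM⟫ : ℂ) * Complex.I)))‖ := by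
  have hxm_norm : ‖xm‖ = 1 := norm_cos_sin θm xm hxm
  have hxM_norm : ‖xM‖ = 1 := norm_cos_sin θM xM hxM
  have hxm_cl : xm ∈ closure K := by
    rw [← WithLp.toLp_ofLp (x := xm), hxm]; exact cos_sin_mem_closure θm θM hm hmM hM K hK θm ⟨le_rfl, hmM.le⟩
  have hxM_cl : xM ∈ closure K := by
    rw [← WithLp.toLp_ofLp (x := xM), hxM]; exact cos_sin_mem_closure θm θM hm hmM hM K hK θM ⟨hmM.le, le_rfl⟩
  have ham : ζ < ⟪d, xm⟫ := hsep xm hxm_cl hxm_norm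
  have haM : ζ < ⟪d, xM⟫ := hsep xM hxM_cl hxM_norm
  have hbm : |⟪dp, xm⟫| ≤ 1 := by
    calc |⟪dp, xm⟫| ≤ ‖dp‖ * ‖xm‖ := abs_real_inner_le_norm dp xm
      _ = 1 := by rw [hdp, hxm_norm, one_mul]
  have hbM : |⟪dp, xM⟫| ≤ 1 := by
    calc |⟪dp, xM⟫| ≤ ‖dp‖ * ‖xM‖ := abs_real_inner_le_norm dp xM
      _ = 1 := by rw [hdp, hxM_norm, one_mul]
  have ham1 : ⟪d, xm⟫ ≤ 1 := by
    calc ⟪d, xm⟫ ≤ ‖d‖ * ‖xm‖ := real_inner_le_norm d xm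
      _ = 1 := by rw [hd, hxm_norm, one_mul]
  have haM1 : ⟪d, xM⟫ ≤ 1 := by
    calc ⟪d, xM⟫ ≤ ‖d‖ * ‖xM‖ := real_inner_le_norm d xM
      _ = 1 := by rw [hd, hxM_norm, one_mul]
  have hz1re : ((⟪d, xm⟫ : ℂ) + (⟪dp, xm⟫ : ℂ) * Complex.I).re = ⟪d, xm⟫ := by simp
  have hz2re : ((⟪d, xM⟫ : ℂ) + (⟪dp, xM⟫ : ℂ) * Complex.I).re = ⟪d, xM⟫ := by simp
  have hz1ne : ((⟪d, xm⟫ : ℂ) + (⟪dp, xm⟫ : ℂ) * Complex.I) ≠ 0 := by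
    intro hz; rw [hz, Complex.zero_re] at hz1re; linarith
  have hz2ne : ((⟪d, xM⟫ : ℂ) + (⟪dp, xM⟫ : ℂ) * Complex.I) ≠ 0 := by
    intro hz; rw [hz, Complex.zero_re] at hz2re; linarith
  have hz1n : Complex.normSq ((⟪d, xm⟫ : ℂ) + (⟪dp, xm⟫ : ℂ) * Complex.I) ≤ 2 := by
    rw [Complex.normSq_add_mul_I]
    nlinarith [sq_abs ⟪dp, xm⟫, abs_nonneg ⟪dp, xm⟫]
  have hz2n : Complex.normSq ((⟪d, xM⟫ : ℂ) + (⟪dp, xM⟫ : ℂ) * Complex.I) ≤ 2 := by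
    rw [Complex.normSq_add_mul_I]
    nlinarith [sq_abs ⟪dp, xM⟫, abs_nonneg ⟪dp, xM⟫]
  refine ⟨ζ, hζ, 2 / ζ, 1, fun τ hτ => ?_⟩
  have hτ0 : (0:ℝ) < τ := lt_of_lt_of_le one_pos hτ
  rw [integ_eval τ h hτ0 hh _ hz1ne, integ_eval τ h hτ0 hh _ hz2ne]
  exact key_est ζ h τ hζ hh hτ _ _ (by rw [hz1re]; exact ham) (by rw [hz2re]; exact haM)
    hz1n hz2n
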